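/- Let (Ω, 𝒜, P) be a probability space, X : Ω → 𝒳 a measurable map into a measurable space 𝒳, 𝒢 = σ(X), and ℋ = σ(X, T) for a square-integrable random variable T. Suppose W = φ(X)·T + f(X) + δ with φ, f : 𝒳 → ℝ measurable, φ∘X bounded, f∘X and δ square-integrable, and E[δ | ℋ] = 0 almost surely. Let α⋆, α_mis : 𝒳 → ℝ be measurable with α⋆(x) ≠ 0 for all x, define the true treatment effect θ(x) = α⋆(x)·φ(x), and assume the conditional variance v := E[(T − E[T | 𝒢])² | 𝒢] is strictly positive almost surely. Then the population limit of the known-link estimator computed with the misspecified slope α_mis satisfies, almost surely: α_mis(X)·E[(W − E[W | 𝒢])·(T − E[T | 𝒢]) | 𝒢] / v − θ(X) = ((α_mis(X) − α⋆(X))/α⋆(X))·θ(X). That is, misspecifying the link slope induces the conditional bias B(X) = ((α_mis(X) − α⋆(X))/α⋆(X))·θ(X). -/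

import Mathlib

open MeasureTheory ProbabilityTheory

/-- The σ-algebra generated by a map `X`. -/
abbrev sigmaGen {Ω 𝒳 : Type*} [MeasurableSpace 𝒳] (X : Ω → 𝒳) : MeasurableSpace Ω :=
  MeasurableSpace.comap X inferInstance

/-- The σ-algebra generated jointly by `X` and `T`. -/
abbrev sigmaGen₂ {Ω 𝒳 : Type*} [MeasurableSpace 𝒳] (X : Ω → 𝒳) (T : Ω → ℝ) :
    MeasurableSpace Ω :=
  MeasurableSpace.comap (fun ω => (X ω, T ω)) inferInstance

lemma memL2_condexp {α : Type*} {m m0 : MeasurableSpace α} (hm : m ≤ m0)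
    (μ : Measure α) [IsFiniteMeasure μ] {f : α → ℝ} (hf : MemLp f 2 μ) :
    MemLp (μ[f|m]) 2 μ := by
  haveI : SigmaFinite (μ.trim hm) := inferInstance
  set g : Lp ℝ 2 μ := (condExpL2 ℝ ℝ hm (hf.toLp f) : Lp ℝ 2 μ) with hg
  have hgm : AEStronglyMeasurable[m] (g : α → ℝ) μ :=
    lpMeas.aestronglyMeasurable _
  have heq : (g : α → ℝ) =ᵐ[μ] μ[f|m] := by
    refine ae_eq_condExp_of_forall_setIntegral_eq hm (hf.integrable one_le_two)
      (fun s _ _ => ((Lp.memLp g).integrable one_le_two).integrableOn)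
      (fun s hs hμs => ?_) hgm
    rw [integral_condExpL2_eq hm (hf.toLp f) hs hμs.ne]
    exact setIntegral_congr_ae (hm s hs) ((hf.coeFn_toLp).mono fun x hx _ => hx)
  exact (Lp.memLp g).ae_eq heq

lemma integrable_mul_memL2 {α : Type*} [MeasurableSpace α] {μ : Measure α}
    {f g : α → ℝ} (hf : MemLp f 2 μ) (hg : MemLp g 2 μ) :
    Integrable (fun ω => f ω * g ω) μ := by
  have : MemLp (f • g) 1 μ := hg.smul hf
  exact memLp_one_iff_integrable.mp this

/-- **Misspecification bias of the known-link estimator.**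
If `W = φ(X)·T + f(X) + δ` with `E[δ | σ(X,T)] = 0` a.s., the true link slope `α⋆` is
nowhere zero, `θ(x) = α⋆(x)·φ(x)`, and the conditional variance of `T` given `σ(X)` is
a.s. positive, then the population limit of the known-link estimator computed with a
misspecified slope `α_mis` differs from `θ(X)` by the conditional bias
`B(X) = ((α_mis(X) - α⋆(X))/α⋆(X))·θ(X)` almost surely. -/
theorem known_link_misspecification_bias
    {Ω 𝒳 : Type*} [MeasurableSpace Ω] [MeasurableSpace 𝒳]
    (P : Measure Ω) [IsProbabilityMeasure P]
    (X : Ω → 𝒳) (hX : Measurable X)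
    (T : Ω → ℝ) (hT : Measurable T) (hT2 : MemLp T 2 P)
    (φ f : 𝒳 → ℝ) (hφ : Measurable φ) (hf : Measurable f)
    (Cφ : ℝ) (hφbdd : ∀ ω, |φ (X ω)| ≤ Cφ)
    (hfX2 : MemLp (fun ω => f (X ω)) 2 P)
    (δ : Ω → ℝ) (hδ2 : MemLp δ 2 P)
    (hδmean : P[δ | sigmaGen₂ X T] =ᵐ[P] 0)
    (W : Ω → ℝ) (hWdef : ∀ ω, W ω = φ (X ω) * T ω + f (X ω) + δ ω)
    (αstar αmis : 𝒳 → ℝ) (hαstar : Measurable αstar) (hαmis : Measurable αmis)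
    (hαstar_ne : ∀ x, αstar x ≠ 0)
    (θ : 𝒳 → ℝ) (hθdef : ∀ x, θ x = αstar x * φ x)
    (hvpos : ∀ᵐ ω ∂P, 0 < (P[fun ω' => (T ω' - (P[T | sigmaGen X]) ω') ^ 2 | sigmaGen X]) ω) :
    ∀ᵐ ω ∂P,
      αmis (X ω)
          * (P[fun ω' => (W ω' - (P[W | sigmaGen X]) ω')
                * (T ω' - (P[T | sigmaGen X]) ω') | sigmaGen X]) ω
          / (P[fun ω' => (T ω' - (P[T | sigmaGen X]) ω') ^ 2 | sigmaGen X]) ω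
        - θ (X ω)
      = ((αmis (X ω) - αstar (X ω)) / αstar (X ω)) * θ (X ω) := by
  -- σ-algebra facts
  have hm : sigmaGen X ≤ ‹MeasurableSpace Ω› := hX.comap_le
  have hm2 : sigmaGen₂ X T ≤ ‹MeasurableSpace Ω› := (hX.prodMk hT).comap_le
  have hm12 : sigmaGen X ≤ sigmaGen₂ X T := by
    rintro s ⟨t, ht, rfl⟩
    exact ⟨Prod.fst ⁻¹' t, measurable_fst ht, rfl⟩
  haveI : SigmaFinite (P.trim hm) := inferInstance
  haveI : SigmaFinite (P.trim hm2) := inferInstance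
  have hXm : Measurable[sigmaGen X] X := fun s hs => ⟨s, hs, rfl⟩
  have hpair : Measurable[sigmaGen₂ X T] (fun ω => (X ω, T ω)) := fun s hs => ⟨s, hs, rfl⟩
  have hTm2 : Measurable[sigmaGen₂ X T] T := (measurable_snd.comp hpair)
  -- notation
  set φX : Ω → ℝ := fun ω => φ (X ω) with hφXdef
  have hφXm : StronglyMeasurable[sigmaGen X] φX := (hφ.comp hXm).stronglyMeasurable
  have hφXT2 : MemLp (fun ω => φX ω * T ω) 2 P := by
    refine hT2.of_le_mul (c := Cφ) ((hφ.comp hX).aestronglyMeasurable.mul hT.aestronglyMeasurable)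
      (Filter.Eventually.of_forall fun ω => ?_)
    rw [Real.norm_eq_abs, Real.norm_eq_abs, abs_mul]
    exact mul_le_mul_of_nonneg_right (hφbdd ω) (abs_nonneg _)
  have hW2 : MemLp W 2 P := by
    have : W = fun ω => (φX ω * T ω + f (X ω)) + δ ω := funext fun ω => by
      simp [hWdef ω, hφXdef]
    rw [this]
    exact (hφXT2.add hfX2).add hδ2
  have hET2 : MemLp (P[T|sigmaGen X]) 2 P := memL2_condexp hm P hT2
  have hEW2 : MemLp (P[W|sigmaGen X]) 2 P := memL2_condexp hm P hW2
  set Tc : Ω → ℝ := fun ω => T ω - (P[T|sigmaGen X]) ω with hTcdef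
  have hTc2 : MemLp Tc 2 P := hT2.sub hET2
  -- Step A : E[δ | σ(X)] = 0 a.s.
  have hδm : P[δ|sigmaGen X] =ᵐ[P] 0 := by
    have h1 := (condExp_condExp_of_le hm12 hm2 (f := δ) (μ := P)).symm
    have h2 : P[P[δ|sigmaGen₂ X T]|sigmaGen X] =ᵐ[P] P[(0 : Ω → ℝ)|sigmaGen X] :=
      condExp_congr_ae hδmean
    refine h1.trans (h2.trans ?_)
    rw [condExp_zero]
  -- Step B : E[W | σ(X)] = φX * E[T|σ(X)] + f∘X a.s.
  have hEW : P[W|sigmaGen X] =ᵐ[P]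
      fun ω => φX ω * (P[T|sigmaGen X]) ω + f (X ω) := by
    have hWfun : W = (fun ω => φX ω * T ω) + ((fun ω => f (X ω)) + δ) := funext fun ω => by
      simp [hWdef ω, hφXdef]; ring
    have hadd1 : P[W|sigmaGen X] =ᵐ[P]
        P[(fun ω => φX ω * T ω)|sigmaGen X] + P[((fun ω => f (X ω)) + δ)|sigmaGen X] := by
      rw [hWfun]
      exact condExp_add (hφXT2.integrable one_le_two) ((hfX2.integrable one_le_two).add (hδ2.integrable one_le_two)) _
    have hadd2 : P[((fun ω => f (X ω)) + δ)|sigmaGen X] =ᵐ[P]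
        P[(fun ω => f (X ω))|sigmaGen X] + P[δ|sigmaGen X] :=
      condExp_add (hfX2.integrable one_le_two) (hδ2.integrable one_le_two) _
    have hmul : P[(fun ω => φX ω * T ω)|sigmaGen X] =ᵐ[P] φX * P[T|sigmaGen X] :=
      condExp_mul_of_stronglyMeasurable_left hφXm (hφXT2.integrable one_le_two) (hT2.integrable one_le_two)
    have hfx : P[(fun ω => f (X ω))|sigmaGen X] = fun ω => f (X ω) :=
      condExp_of_stronglyMeasurable hm ((hf.comp hXm).stronglyMeasurable) (hfX2.integrable one_le_two)
    filter_upwards [hadd1, hadd2, hmul, hδm] with ω h1 h2 h3 h4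
    simp only [Pi.add_apply, Pi.mul_apply, Pi.zero_apply] at *
    rw [h1, h2, h3, hfx, h4]
    ring
  -- Step C : the covariance integrand equals φX * Tc² + δ * Tc a.e.
  have hcov_fun : (fun ω => (W ω - (P[W|sigmaGen X]) ω) * Tc ω) =ᵐ[P]
      fun ω => φX ω * Tc ω ^ 2 + δ ω * Tc ω := by
    filter_upwards [hEW] with ω h
    rw [hWdef ω, h]
    simp only [hTcdef, hφXdef]
    ring
  -- Step D1 : E[δ * Tc | σ(X)] = 0
  have hTcm2 : StronglyMeasurable[sigmaGen₂ X T] Tc := by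
    refine StronglyMeasurable.sub hTm2.stronglyMeasurable ?_
    exact stronglyMeasurable_condExp.mono hm12
  have hδTc_int : Integrable (fun ω => δ ω * Tc ω) P := integrable_mul_memL2 hδ2 hTc2
  have hδTc : P[(fun ω => δ ω * Tc ω)|sigmaGen X] =ᵐ[P] 0 := by
    have hmul2 : P[(fun ω => Tc ω * δ ω)|sigmaGen₂ X T] =ᵐ[P] Tc * P[δ|sigmaGen₂ X T] :=
      condExp_mul_of_stronglyMeasurable_left hTcm2
        (integrable_mul_memL2 hTc2 hδ2) (hδ2.integrable one_le_two)
    have hmul2' : P[(fun ω => δ ω * Tc ω)|sigmaGen₂ X T] =ᵐ[P] 0 := by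
      have : (fun ω => δ ω * Tc ω) = fun ω => Tc ω * δ ω := funext fun ω => mul_comm _ _
      rw [this]
      filter_upwards [hmul2, hδmean] with ω h1 h2
      simp only [Pi.mul_apply, Pi.zero_apply] at *
      rw [h1, h2, mul_zero]
    have h1 := (condExp_condExp_of_le hm12 hm2 (f := fun ω => δ ω * Tc ω) (μ := P)).symm
    refine h1.trans ?_
    refine (condExp_congr_ae hmul2').trans ?_
    rw [condExp_zero]
  -- Step D2 : the conditional covariance equals φX * v a.e.
  have hTcsq_int : Integrable (fun ω => Tc ω ^ 2) P := hTc2.integrable_sq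
  have hφTcsq_int : Integrable (fun ω => φX ω * Tc ω ^ 2) P := by
    refine hTcsq_int.bdd_mul (c := Cφ) ((hφ.comp hX).aestronglyMeasurable) (Filter.Eventually.of_forall fun ω => ?_)
    rw [Real.norm_eq_abs]; exact hφbdd ω
  have hpull : P[(fun ω => φX ω * Tc ω ^ 2)|sigmaGen X] =ᵐ[P]
      φX * P[(fun ω => Tc ω ^ 2)|sigmaGen X] :=
    condExp_mul_of_stronglyMeasurable_left hφXm hφTcsq_int hTcsq_int
  set cov : Ω → ℝ := fun ω' => (W ω' - (P[W|sigmaGen X]) ω') * (T ω' - (P[T|sigmaGen X]) ω') with hcovdef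
  have hcov : P[cov|sigmaGen X] =ᵐ[P]
      fun ω => φX ω * (P[(fun ω' => Tc ω' ^ 2)|sigmaGen X]) ω := by
    have h0 : P[cov|sigmaGen X] =ᵐ[P]
        P[(fun ω => φX ω * Tc ω ^ 2 + δ ω * Tc ω)|sigmaGen X] := condExp_congr_ae hcov_fun
    have hadd : P[(fun ω => φX ω * Tc ω ^ 2 + δ ω * Tc ω)|sigmaGen X] =ᵐ[P]
        P[(fun ω => φX ω * Tc ω ^ 2)|sigmaGen X] + P[(fun ω => δ ω * Tc ω)|sigmaGen X] :=
      condExp_add hφTcsq_int hδTc_int _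
    filter_upwards [h0, hadd, hpull, hδTc] with ω h0 h1 h2 h3
    simp only [Pi.add_apply, Pi.mul_apply, Pi.zero_apply] at *
    rw [h0, h1, h2, h3, add_zero]
  -- Conclusion
  filter_upwards [hcov, hvpos] with ω hcovω hvω
  have hv_ne : (P[fun ω' => (T ω' - (P[T|sigmaGen X]) ω') ^ 2|sigmaGen X]) ω ≠ 0 := ne_of_gt hvω
  rw [hcovω, hθdef]
  field_simp [hαstar_ne (X ω)]
  ring
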